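/- Every chirotope of rank k on I yields an oriented even Δ-matroid supported on k-sets: if χ : I^k → {−1,0,1} is a chirotope, then the map p : 2^I → {−1,0,1} defined by p({j₁ < … < j_k}) = χ(j₁,…,j_k) on k-sets and p(S) = 0 for |S| ≠ k satisfies the oriented even Δ-matroid axioms. Conversely, an oriented even Δ-matroid whose support consists only of k-sets arises in this way from a chirotope. -/

import Mathlib

/-- A **chirotope** of rank `k` on `I = {1,…,n}`: a map `χ : I^k → {−1, 0, 1}`
(encoded with integer values) such that (1) `χ` is not identically zero; (2) `χ` is
alternating; (3) `χ` satisfies the chirotope (Grassmann–Plücker) exchange condition. -/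
def IsChirotope {n k : ℕ} (χ : (Fin k → Fin n) → ℤ) : Prop :=
  (∀ v, χ v = -1 ∨ χ v = 0 ∨ χ v = 1) ∧
  (∃ v, χ v ≠ 0) ∧
  (∀ (v : Fin k → Fin n) (σ : Equiv.Perm (Fin k)),
    χ (v ∘ σ) = (Equiv.Perm.sign σ : ℤ) * χ v) ∧
  (∀ (hk : 0 < k) (x y : Fin k → Fin n),
    (∀ i : Fin k,
      0 ≤ χ (Function.update x ⟨0, hk⟩ (y i)) * χ (Function.update y i (x ⟨0, hk⟩))) →
    0 ≤ χ x * χ y)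

/-- An **oriented even Δ-matroid** on `I = {1,…,n}`, with values encoded as
integers in `{−1, 0, 1}`: `p` is not identically zero, its support has constant
parity of cardinality, and whenever `A Δ B = {i₁ < … < i_l}` and, for some
`w ∈ {±1}`, all `κ_j = w(−1)^j p(A Δ {i_j}) p(B Δ {i_j})` are nonnegative, they are
all zero. -/
def IsOrientedEvenDeltaMatroid {n : ℕ} (p : Finset (Fin n) → ℤ) : Prop :=
  (∀ S, p S = -1 ∨ p S = 0 ∨ p S = 1) ∧
  (∃ S, p S ≠ 0) ∧
  (∀ A B : Finset (Fin n), p A ≠ 0 → p B ≠ 0 → A.card % 2 = B.card % 2) ∧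
  (∀ A B : Finset (Fin n), ∀ w : ℤ, (w = 1 ∨ w = -1) →
    (∀ j : Fin (symmDiff A B).card,
      0 ≤ w * (-1 : ℤ) ^ ((j : ℕ) + 1) *
        p (symmDiff A {((symmDiff A B).orderIsoOfFin rfl j : Fin n)}) *
        p (symmDiff B {((symmDiff A B).orderIsoOfFin rfl j : Fin n)})) →
    (∀ j : Fin (symmDiff A B).card,
      w * (-1 : ℤ) ^ ((j : ℕ) + 1) *
        p (symmDiff A {((symmDiff A B).orderIsoOfFin rfl j : Fin n)}) *
        p (symmDiff B {((symmDiff A B).orderIsoOfFin rfl j : Fin n)}) = 0))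

/-- The map `p : 2^I → {−1, 0, 1}` obtained from a rank-`k` map `χ : I^k → ℤ` by
evaluating `χ` on the increasing enumeration of each `k`-set and extending by zero
to sets of other cardinalities. -/
noncomputable def setMapOfChirotope {n k : ℕ} (χ : (Fin k → Fin n) → ℤ)
    (S : Finset (Fin n)) : ℤ :=
  if h : S.card = k then χ (fun i => ((S.orderIsoOfFin h i : S) : Fin n)) else 0

open Finset Equiv Equiv.Perm

variable {n k : ℕ}

/-- The increasing enumeration of a finset of known cardinality. -/
noncomputable def enumC (S : Finset (Fin n)) (h : S.card = k) : Fin k → Fin n :=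
  fun i => ((S.orderIsoOfFin h i : S) : Fin n)

lemma enumC_strictMono (S : Finset (Fin n)) (h : S.card = k) : StrictMono (enumC S h) :=
  fun a b hab => by simpa [enumC] using (S.orderIsoOfFin h).strictMono hab

lemma enumC_injective (S : Finset (Fin n)) (h : S.card = k) : Function.Injective (enumC S h) :=
  (enumC_strictMono S h).injective

lemma enumC_mem (S : Finset (Fin n)) (h : S.card = k) (i : Fin k) : enumC S h i ∈ S :=
  (S.orderIsoOfFin h i).2

lemma enumC_surj (S : Finset (Fin n)) (h : S.card = k) {a : Fin n} (ha : a ∈ S) :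
    ∃ i, enumC S h i = a :=
  ⟨(S.orderIsoOfFin h).symm ⟨a, ha⟩, by simp [enumC]⟩

/-- The rank of `a` in `S`: the number of elements of `S` smaller than `a`. -/
def rk (S : Finset (Fin n)) (a : Fin n) : ℕ := (S.filter (fun b => b < a)).card

lemma rk_lt_card {S : Finset (Fin n)} {a : Fin n} (ha : a ∈ S) : rk S a < S.card := by
  apply Finset.card_lt_card
  constructor
  · exact Finset.filter_subset _ _
  · intro hsub
    exact absurd (Finset.mem_filter.mp (hsub ha)).2 (lt_irrefl a)

lemma rk_enumC (S : Finset (Fin n)) (h : S.card = k) (j : Fin k) :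
    rk S (enumC S h j) = (j : ℕ) := by
  classical
  have himg : S.filter (fun b => b < enumC S h j)
      = (Finset.univ.filter (fun i : Fin k => i < j)).image (enumC S h) := by
    ext a
    simp only [Finset.mem_filter, Finset.mem_image, Finset.mem_univ, true_and]
    constructor
    · rintro ⟨haS, hlt⟩
      obtain ⟨i, rfl⟩ := enumC_surj S h haS
      exact ⟨i, (enumC_strictMono S h).lt_iff_lt.mp hlt, rfl⟩
    · rintro ⟨i, hij, rfl⟩
      exact ⟨enumC_mem S h i, enumC_strictMono S h hij⟩
  rw [rk, himg, Finset.card_image_of_injective _ (enumC_injective S h)]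
  have : Finset.univ.filter (fun i : Fin k => i < j) = Finset.Iio j := by
    ext i; simp
  rw [this, Fin.card_Iio]

lemma rk_strictMonoOn {S : Finset (Fin n)} {a b : Fin n} (ha : a ∈ S)
    (hab : a < b) : rk S a < rk S b := by
  apply Finset.card_lt_card
  constructor
  · intro x hx
    rw [Finset.mem_filter] at hx ⊢
    exact ⟨hx.1, lt_trans hx.2 hab⟩
  · intro hsub
    have : a ∈ S.filter (fun c => c < a) := hsub (Finset.mem_filter.mpr ⟨ha, hab⟩)
    exact absurd (Finset.mem_filter.mp this).2 (lt_irrefl a)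

lemma rk_injOn {S : Finset (Fin n)} {a b : Fin n} (ha : a ∈ S) (hb : b ∈ S)
    (hab : rk S a = rk S b) : a = b := by
  rcases lt_trichotomy a b with hlt | heq | hlt
  · have := rk_strictMonoOn ha hlt; omega
  · exact heq
  · have := rk_strictMonoOn hb hlt; omega

lemma enumC_rk {S : Finset (Fin n)} (h : S.card = k) {a : Fin n} (ha : a ∈ S) :
    enumC S h ⟨rk S a, h ▸ rk_lt_card ha⟩ = a := by
  apply rk_injOn (enumC_mem S h _) ha
  rw [rk_enumC]

lemma rk_lt_rk_iff {S : Finset (Fin n)} {a b : Fin n} (ha : a ∈ S) (hb : b ∈ S) :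
    a < b ↔ rk S a < rk S b := by
  constructor
  · exact rk_strictMonoOn ha
  · intro h
    rcases lt_trichotomy a b with hlt | heq | hlt
    · exact hlt
    · exact absurd h (by rw [heq]; exact lt_irrefl _)
    · exact absurd (rk_strictMonoOn hb hlt) (by omega)

lemma rk_insert {S : Finset (Fin n)} {a' : Fin n} (ha' : a' ∉ S) (a : Fin n) :
    rk (insert a' S) a = rk S a + (if a' < a then 1 else 0) := by
  classical
  rw [rk, Finset.filter_insert]
  split_ifs with h
  · rw [Finset.card_insert_of_notMem (fun hc => ha' (Finset.mem_filter.mp hc).1), rk]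
  · rw [rk]; omega
lemma rk_erase {S : Finset (Fin n)} {a' : Fin n} (ha' : a' ∈ S) (a : Fin n) :
    rk S a = rk (S.erase a') a + (if a' < a then 1 else 0) := by
  classical
  have : S = insert a' (S.erase a') := (Finset.insert_erase ha').symm
  conv_lhs => rw [this]
  exact rk_insert (Finset.notMem_erase _ _) a

lemma rk_union {S T : Finset (Fin n)} (h : Disjoint S T) (a : Fin n) :
    rk (S ∪ T) a = rk S a + rk T a := by
  classical
  rw [rk, Finset.filter_union, Finset.card_union_of_disjoint
    (Finset.disjoint_filter_filter h), rk, rk]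

lemma rk_symmDiff (A B : Finset (Fin n)) (a : Fin n) :
    rk A a + rk B a = rk (symmDiff A B) a + 2 * rk (A ∩ B) a := by
  classical
  have hA : rk A a = rk (A \ B) a + rk (A ∩ B) a := by
    rw [← rk_union (Finset.disjoint_sdiff_inter A B), Finset.sdiff_union_inter]
  have hB : rk B a = rk (B \ A) a + rk (B ∩ A) a := by
    rw [← rk_union (Finset.disjoint_sdiff_inter B A), Finset.sdiff_union_inter]
  have hD : rk (symmDiff A B) a = rk (A \ B) a + rk (B \ A) a := by
    rw [symmDiff_def, Finset.sup_eq_union, rk_union (disjoint_sdiff_sdiff)]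
  rw [hA, hB, hD, Finset.inter_comm B A]
  ring

lemma symmDiff_singleton_of_mem {A : Finset (Fin n)} {a : Fin n} (ha : a ∈ A) :
    symmDiff A {a} = A.erase a := by
  classical
  ext x
  simp only [Finset.mem_symmDiff, Finset.mem_singleton, Finset.mem_erase]
  constructor
  · rintro (⟨hx, hne⟩ | ⟨rfl, hna⟩)
    · exact ⟨hne, hx⟩
    · exact absurd ha hna
  · rintro ⟨hne, hx⟩; exact Or.inl ⟨hx, hne⟩

lemma symmDiff_singleton_of_not_mem {A : Finset (Fin n)} {a : Fin n} (ha : a ∉ A) :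
    symmDiff A {a} = insert a A := by
  classical
  ext x
  simp only [Finset.mem_symmDiff, Finset.mem_singleton, Finset.mem_insert]
  constructor
  · rintro (⟨hx, hne⟩ | ⟨rfl, _⟩)
    · exact Or.inr hx
    · exact Or.inl rfl
  · rintro (rfl | hx)
    · exact Or.inr ⟨rfl, ha⟩
    · exact Or.inl ⟨hx, fun he => ha (he ▸ hx)⟩

/-- Alternating map hypothesis. -/
def Alt (χ : (Fin k → Fin n) → ℤ) : Prop :=
  ∀ (v : Fin k → Fin n) (σ : Equiv.Perm (Fin k)),
    χ (v ∘ σ) = (Equiv.Perm.sign σ : ℤ) * χ v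

lemma neg_one_pow_congr_mod {m m' : ℕ} (h : m % 2 = m' % 2) : ((-1 : ℤ)) ^ m = (-1) ^ m' := by
  rcases Nat.even_or_odd m with he | ho
  · have he' : Even m' := by rw [Nat.even_iff] at *; omega
    rw [he.neg_one_pow, he'.neg_one_pow]
  · have ho' : Odd m' := by rw [Nat.odd_iff] at *; omega
    rw [ho.neg_one_pow, ho'.neg_one_pow]

lemma enumC_congr {S T : Finset (Fin n)} (hST : S = T) (hS : S.card = k) :
    enumC S hS = enumC T (hST ▸ hS) := by subst hST; rfl

lemma chi_zero_of_not_injective {χ : (Fin k → Fin n) → ℤ} (halt : Alt χ)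
    {v : Fin k → Fin n} (hv : ¬ Function.Injective v) : χ v = 0 := by
  rw [Function.Injective] at hv
  push_neg at hv
  obtain ⟨i, j, hvij, hij⟩ := hv
  have hcomp : v ∘ (Equiv.swap i j) = v := by
    funext x
    simp only [Function.comp_apply, Equiv.swap_apply_def]
    split_ifs with h1 h2
    · rw [h1, hvij]
    · rw [h2, hvij]
    · rfl
  have := halt v (Equiv.swap i j)
  rw [hcomp, Equiv.Perm.sign_swap hij] at this
  simp only [Units.val_neg, Units.val_one, neg_mul, one_mul] at this
  omega

lemma update_comp_perm {α : Type*} (f : Fin k → α) (σ : Equiv.Perm (Fin k)) (i : Fin k) (c : α) :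
    Function.update (f ∘ σ) i c = (Function.update f (σ i) c) ∘ σ := by
  have := Function.update_comp_equiv f σ (σ i) c
  rw [Equiv.symm_apply_apply] at this
  rw [this]

/-- The image of a tuple as a finset. -/
def imv (v : Fin k → Fin n) : Finset (Fin n) := Finset.image v Finset.univ

lemma mem_imv (v : Fin k → Fin n) (i : Fin k) : v i ∈ imv v := by
  simp [imv]

lemma card_imv {v : Fin k → Fin n} (hv : Function.Injective v) : (imv v).card = k := by
  rw [imv, Finset.card_image_of_injective _ hv, Finset.card_univ, Fintype.card_fin]

/-- The permutation sorting an injective tuple. -/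
noncomputable def permOf (v : Fin k → Fin n) (hv : Function.Injective v) :
    Equiv.Perm (Fin k) :=
  Equiv.ofBijective (fun i => ((imv v).orderIsoOfFin (card_imv hv)).symm ⟨v i, mem_imv v i⟩)
    (by
      rw [Fintype.bijective_iff_injective_and_card]
      refine ⟨fun i j hij => ?_, rfl⟩
      have := congrArg (fun x => (((imv v).orderIsoOfFin (card_imv hv)) x : Fin n)) hij
      simp only [OrderIso.apply_symm_apply] at this
      exact hv this)

lemma enumC_permOf {v : Fin k → Fin n} (hv : Function.Injective v) (i : Fin k) :
    enumC (imv v) (card_imv hv) (permOf v hv i) = v i := by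
  simp [permOf, enumC, Equiv.ofBijective_apply]

lemma comp_permOf {v : Fin k → Fin n} (hv : Function.Injective v) :
    enumC (imv v) (card_imv hv) ∘ (permOf v hv) = v :=
  funext fun i => enumC_permOf hv i

lemma chi_of_injective {χ : (Fin k → Fin n) → ℤ} (halt : Alt χ)
    {v : Fin k → Fin n} (hv : Function.Injective v) :
    χ v = (Equiv.Perm.sign (permOf v hv) : ℤ) * χ (enumC (imv v) (card_imv hv)) := by
  conv_lhs => rw [← comp_permOf hv]
  exact halt _ _

lemma permOf_val {v : Fin k → Fin n} (hv : Function.Injective v) (i : Fin k) :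
    ((permOf v hv i : Fin k) : ℕ) = rk (imv v) (v i) := by
  have h1 := rk_enumC (imv v) (card_imv hv) (permOf v hv i)
  rw [enumC_permOf hv i] at h1
  omega

lemma permOf_eq {v : Fin k → Fin n} (hv : Function.Injective v) (σ : Equiv.Perm (Fin k))
    (hσ : ∀ i, enumC (imv v) (card_imv hv) (σ i) = v i) : σ = permOf v hv := by
  apply Equiv.ext
  intro i
  exact enumC_injective _ _ ((hσ i).trans (enumC_permOf hv i).symm)

lemma card_T {S : Finset (Fin n)} (hS : S.card = k) {a0 a : Fin n} (ha0 : a0 ∈ S)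
    (ha : a ∉ S.erase a0) : (insert a (S.erase a0)).card = k := by
  rw [Finset.card_insert_of_notMem ha, Finset.card_erase_of_mem ha0]
  have : 1 ≤ S.card := Finset.card_pos.mpr ⟨a0, ha0⟩
  omega

/-- The key replacement sign lemma: replacing the entry at position `r0` of the
increasing enumeration of `S` by `a` gives, up to the sign `(-1)^(r0 + rk T a)`,
the increasing enumeration of the new set `T`. -/
lemma chi_update {χ : (Fin k → Fin n) → ℤ} (halt : Alt χ) {S T : Finset (Fin n)}
    (hS : S.card = k) (hT : T.card = k) (r0 : Fin k) {a : Fin n}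
    (ha : a ∉ S.erase (enumC S hS r0))
    (hTeq : T = insert a (S.erase (enumC S hS r0))) :
    χ (Function.update (enumC S hS) r0 a)
      = (-1 : ℤ) ^ ((r0 : ℕ) + rk T a) * χ (enumC T hT) := by
  classical
  set a0 := enumC S hS r0 with ha0def
  have ha0S : a0 ∈ S := enumC_mem S hS r0
  by_cases haa0 : a = a0
  · -- trivial case: the update does nothing
    have hTS : T = S := by rw [hTeq, haa0, Finset.insert_erase ha0S]
    have h1 : Function.update (enumC S hS) r0 a = enumC S hS := by
      rw [haa0, ha0def]; exact Function.update_eq_self _ _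
    have h2 : rk T a = (r0 : ℕ) := by rw [haa0, hTS, ha0def]; exact rk_enumC S hS r0
    have h3 : χ (enumC T hT) = χ (enumC S hS) := by
      rw [enumC_congr hTS hT]
    rw [h1, h2, h3, ← two_mul]
    have h4 : ((-1 : ℤ)) ^ (2 * (r0 : ℕ)) = 1 := by
      rw [pow_mul]; norm_num
    rw [h4, one_mul]
  · -- main case: a ∉ S
    have haS : a ∉ S := by
      intro haS
      exact ha (Finset.mem_erase.mpr ⟨haa0, haS⟩)
    obtain ⟨m, rfl⟩ : ∃ m, k = m + 1 := ⟨k - 1, by have := r0.pos; omega⟩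
    set u := Function.update (enumC S hS) r0 a with hudef
    have hu_apply : ∀ j, j ≠ r0 → u j = enumC S hS j := by
      intro j hj; rw [hudef, Function.update_of_ne hj]
    have hu_r0 : u r0 = a := by rw [hudef, Function.update_self]
    have hu : Function.Injective u := by
      intro i j hij
      by_cases hi : i = r0 <;> by_cases hj : j = r0
      · rw [hi, hj]
      · exfalso; rw [hi, hu_r0, hu_apply j hj] at hij
        exact haS (hij ▸ enumC_mem S hS j)
      · exfalso; rw [hj, hu_r0, hu_apply i hi] at hij
        exact haS (hij.symm ▸ enumC_mem S hS i)
      · rw [hu_apply i hi, hu_apply j hj] at hij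
        exact enumC_injective S hS hij
    have himv : imv u = T := by
      rw [hTeq]
      ext x
      simp only [imv, Finset.mem_image, Finset.mem_univ, true_and, Finset.mem_insert,
        Finset.mem_erase]
      constructor
      · rintro ⟨i, rfl⟩
        by_cases hi : i = r0
        · left; rw [hi, hu_r0]
        · right
          rw [hu_apply i hi]
          exact ⟨fun he => hi (enumC_injective S hS (he.trans ha0def)), enumC_mem S hS i⟩
      · rintro (rfl | ⟨hxne, hxS⟩)
        · exact ⟨r0, hu_r0⟩
        · obtain ⟨i, rfl⟩ := enumC_surj S hS hxS
          have hi : i ≠ r0 := fun he => hxne (by rw [he, ha0def])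
          exact ⟨i, hu_apply i hi⟩
    have haT : a ∈ T := by rw [hTeq]; exact Finset.mem_insert_self _ _
    set r1n := rk T a with hr1def
    have hr1lt : r1n < m + 1 := hT ▸ rk_lt_card haT
    set r1 : Fin (m + 1) := ⟨r1n, hr1lt⟩ with hr1fin
    set π := permOf u hu with hπdef
    have hπval : ∀ j, ((π j : Fin (m + 1)) : ℕ) = rk T (u j) := by
      intro j
      rw [hπdef, permOf_val hu j, himv]
    -- key: cycleRange r1 ∘ π = cycleRange r0
    have key : ∀ j, Fin.cycleRange r1 (π j) = Fin.cycleRange r0 j := by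
      intro j
      by_cases hj : j = r0
      · subst hj
        have : π j = r1 := by
          apply Fin.ext
          rw [hπval j, hu_r0]
        rw [this, Fin.cycleRange_of_eq rfl, Fin.cycleRange_of_eq rfl]
      · have hbS : enumC S hS j ∈ S := enumC_mem S hS j
        set b := enumC S hS j with hbdef
        have hbe : b ∈ S.erase a0 :=
          Finset.mem_erase.mpr ⟨fun he => hj (enumC_injective S hS (he.trans ha0def)), hbS⟩
        have hbT : b ∈ T := by rw [hTeq]; exact Finset.mem_insert_of_mem hbe
        have hba : b ≠ a := fun he => ha (he ▸ hbe)
        have hujb : u j = b := hu_apply j hj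
        have hrkb : rk T b + (if a0 < b then 1 else 0) = (j : ℕ) + (if a < b then 1 else 0) := by
          have h1 : rk T b = rk (S.erase a0) b + (if a < b then 1 else 0) := by
            rw [hTeq]; exact rk_insert ha b
          have h2 : rk S b = rk (S.erase a0) b + (if a0 < b then 1 else 0) :=
            rk_erase ha0S b
          have h3 : rk S b = (j : ℕ) := rk_enumC S hS j
          omega
        have hord : a0 < b ↔ (r0 : ℕ) < (j : ℕ) := by
          rw [ha0def, hbdef]
          constructor
          · intro h
            exact (enumC_strictMono S hS).lt_iff_lt.mp h
          · intro h
            exact enumC_strictMono S hS h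
        have hab_iff : a < b ↔ r1n < rk T b := rk_lt_rk_iff haT hbT
        have hba_iff : b < a ↔ rk T b < r1n := rk_lt_rk_iff hbT haT
        have hπj : ((π j : Fin (m+1)) : ℕ) = rk T b := by rw [hπval j, hujb]
        have hjr0 : (j : ℕ) ≠ (r0 : ℕ) := fun he => hj (Fin.ext he)
        rcases Nat.lt_or_ge (j : ℕ) (r0 : ℕ) with hlt | hge
        · -- j < r0, so a0 > b
          have hnord : ¬ a0 < b := fun h => by have := hord.mp h; omega
          have hrkb' : rk T b = (j : ℕ) + (if a < b then 1 else 0) := by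
            simp only [if_neg hnord] at hrkb; omega
          by_cases hab : a < b
          · -- rk T b = j + 1, r1 ≤ j
            have h1 : rk T b = (j : ℕ) + 1 := by rw [hrkb', if_pos hab]
            have h2 : r1n ≤ (j : ℕ) := by have := hab_iff.mp hab; omega
            have hjlt1 : (j : ℕ) + 1 < m + 1 :=
              Nat.lt_of_le_of_lt (Nat.succ_le_of_lt hlt) r0.isLt
            have hπeq : (π j : Fin (m+1)) = ⟨(j : ℕ) + 1, hjlt1⟩ := by
              apply Fin.ext
              show ((π j : Fin (m+1)) : ℕ) = (j : ℕ) + 1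
              omega
            rw [hπeq, Fin.cycleRange_of_gt (by
              rw [Fin.lt_def]; show r1n < (j : ℕ) + 1; omega),
              Fin.cycleRange_of_lt (by rw [Fin.lt_def]; exact hlt)]
            apply Fin.ext
            show (j : ℕ) + 1 = ((j + 1 : Fin (m+1)) : ℕ)
            rw [Fin.val_add_one_of_lt (by rw [Fin.lt_def, Fin.val_last]; omega)]
          · have hba' : b < a := (Ne.lt_or_gt hba).resolve_right hab
            have h1 : rk T b = (j : ℕ) := by rw [hrkb', if_neg hab]; omega
            have h2 : (j : ℕ) < r1n := by have := hba_iff.mp hba'; omega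
            have hπeq : (π j : Fin (m+1)) = j := by
              apply Fin.ext
              show ((π j : Fin (m+1)) : ℕ) = (j : ℕ)
              omega
            rw [hπeq, Fin.cycleRange_of_lt (by rw [Fin.lt_def]; exact h2),
              Fin.cycleRange_of_lt (by rw [Fin.lt_def]; exact hlt)]
        · -- r0 < j, so a0 < b
          have hlt' : (r0 : ℕ) < (j : ℕ) := by omega
          have hord' : a0 < b := hord.mpr hlt'
          have hrkb' : rk T b + 1 = (j : ℕ) + (if a < b then 1 else 0) := by
            simp only [if_pos hord'] at hrkb; omega
          by_cases hab : a < b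
          · have h1 : rk T b = (j : ℕ) := by rw [if_pos hab] at hrkb'; omega
            have h2 : r1n < (j : ℕ) := by have := hab_iff.mp hab; omega
            have hπeq : (π j : Fin (m+1)) = j := by
              apply Fin.ext
              show ((π j : Fin (m+1)) : ℕ) = (j : ℕ)
              omega
            rw [hπeq, Fin.cycleRange_of_gt (by rw [Fin.lt_def]; exact h2),
              Fin.cycleRange_of_gt (by rw [Fin.lt_def]; exact hlt')]
          · have hba' : b < a := (Ne.lt_or_gt hba).resolve_right hab
            have h1 : rk T b + 1 = (j : ℕ) := by rw [if_neg hab] at hrkb'; omega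
            have h2 : rk T b < r1n := hba_iff.mp hba'
            have hjlt1 : (j : ℕ) - 1 < m + 1 :=
              Nat.lt_of_le_of_lt (Nat.sub_le _ _) j.isLt
            have hπeq : (π j : Fin (m+1)) = ⟨(j : ℕ) - 1, hjlt1⟩ := by
              apply Fin.ext
              show ((π j : Fin (m+1)) : ℕ) = (j : ℕ) - 1
              omega
            rw [hπeq, Fin.cycleRange_of_lt (by
              rw [Fin.lt_def]; show (j : ℕ) - 1 < r1n; omega),
              Fin.cycleRange_of_gt (by rw [Fin.lt_def]; exact hlt')]
            apply Fin.ext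
            have hlast : (⟨(j : ℕ) - 1, hjlt1⟩ : Fin (m+1)) < Fin.last m := by
              rw [Fin.lt_def, Fin.val_last]
              show (j : ℕ) - 1 < m
              have := j.isLt
              omega
            rw [Fin.val_add_one_of_lt hlast]
            show ((j : ℕ) - 1) + 1 = (j : ℕ)
            omega
    have keyEq : (Fin.cycleRange r1) * π = Fin.cycleRange r0 := by
      apply Equiv.ext
      intro j
      exact key j
    have hsign : (Equiv.Perm.sign π : ℤ) = (-1 : ℤ) ^ ((r0 : ℕ) + r1n) := by
      have hr1s : (Equiv.Perm.sign (Fin.cycleRange r1) : ℤ) = (-1) ^ r1n := by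
        rw [Fin.sign_cycleRange]; push_cast; rfl
      have hr0s : (Equiv.Perm.sign (Fin.cycleRange r0) : ℤ) = (-1) ^ (r0 : ℕ) := by
        rw [Fin.sign_cycleRange]; push_cast; rfl
      have h3 : (Equiv.Perm.sign (Fin.cycleRange r1) : ℤ) * (Equiv.Perm.sign π : ℤ)
          = (Equiv.Perm.sign (Fin.cycleRange r0) : ℤ) := by
        rw [← Units.val_mul, ← map_mul, keyEq]
      rw [hr1s, hr0s] at h3
      have hsq : ((-1 : ℤ)) ^ r1n * ((-1 : ℤ)) ^ r1n = 1 := by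
        rw [← pow_add, ← two_mul, pow_mul]; norm_num
      calc (Equiv.Perm.sign π : ℤ)
          = ((-1:ℤ)) ^ r1n * (((-1:ℤ)) ^ r1n * (Equiv.Perm.sign π : ℤ)) := by
            rw [← mul_assoc, hsq, one_mul]
        _ = ((-1:ℤ)) ^ r1n * ((-1:ℤ)) ^ (r0 : ℕ) := by rw [h3]
        _ = ((-1:ℤ)) ^ ((r0 : ℕ) + r1n) := by rw [← pow_add, Nat.add_comm]
    have hchi := chi_of_injective halt hu
    rw [hchi, hsign]
    congr 1
    rw [enumC_congr himv (card_imv hu)]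

lemma setMap_eq {χ : (Fin k → Fin n) → ℤ} {S : Finset (Fin n)} (h : S.card = k) :
    setMapOfChirotope χ S = χ (enumC S h) := by
  rw [setMapOfChirotope, dif_pos h]; rfl

lemma setMap_ne {χ : (Fin k → Fin n) → ℤ} {S : Finset (Fin n)} (h : S.card ≠ k) :
    setMapOfChirotope χ S = 0 := dif_neg h

lemma erase_eq_insert_erase_erase {A : Finset (Fin n)} {a0 a : Fin n}
    (ha0 : a0 ∈ A) (hne : a ≠ a0) :
    A.erase a = insert a0 ((A.erase a0).erase a) := by
  classical
  ext x
  simp only [Finset.mem_erase, Finset.mem_insert]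
  constructor
  · rintro ⟨hxa, hxA⟩
    by_cases hx0 : x = a0
    · exact Or.inl hx0
    · exact Or.inr ⟨hxa, hx0, hxA⟩
  · rintro (rfl | ⟨hxa, _, hxA⟩)
    · exact ⟨fun h => hne h.symm, ha0⟩
    · exact ⟨hxa, hxA⟩

lemma if_lt_sum {a b : Fin n} (hne : a ≠ b) :
    (if a < b then (1:ℕ) else 0) + (if b < a then 1 else 0) = 1 := by
  rcases lt_trichotomy a b with h | h | h
  · rw [if_pos h, if_neg (asymm h)]
  · exact absurd h hne
  · rw [if_neg (asymm h), if_pos h]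

/-- The master product formula: each Grassmann–Plücker product for the tuples
built from `insert a0 B` and `A.erase a0` equals, up to a global sign, a
Δ-matroid exchange term. -/
lemma prod_formula {χ : (Fin k → Fin n) → ℤ} (halt : Alt χ) (hk : 0 < k)
    {A B : Finset (Fin n)} (hA : A.card = k + 1) (hB : B.card + 1 = k)
    {a0 : Fin n} (ha0A : a0 ∈ A) (ha0B : a0 ∉ B)
    (hS1 : (insert a0 B).card = k) (hS2 : (A.erase a0).card = k)
    (σx σy : Equiv.Perm (Fin k))
    (hσx : ((σx ⟨0, hk⟩ : Fin k) : ℕ) = rk (insert a0 B) a0)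
    (i : Fin k) :
    χ (Function.update (enumC (insert a0 B) hS1 ∘ σx) ⟨0, hk⟩
        ((enumC (A.erase a0) hS2 ∘ σy) i))
      * χ (Function.update (enumC (A.erase a0) hS2 ∘ σy) i
        ((enumC (insert a0 B) hS1 ∘ σx) ⟨0, hk⟩))
    = (Equiv.Perm.sign σx : ℤ) * (Equiv.Perm.sign σy : ℤ)
      * (-1 : ℤ) ^ (rk (insert a0 B) a0 + rk A a0)
      * ((-1 : ℤ) ^ (rk (symmDiff A B) (enumC (A.erase a0) hS2 (σy i)) + 1)
        * setMapOfChirotope χ (A.erase (enumC (A.erase a0) hS2 (σy i)))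
        * setMapOfChirotope χ (insert (enumC (A.erase a0) hS2 (σy i)) B)) := by
  classical
  set a := enumC (A.erase a0) hS2 (σy i) with hadef
  have haS2 : a ∈ A.erase a0 := enumC_mem _ _ _
  have haA : a ∈ A := (Finset.mem_erase.mp haS2).2
  have haa0 : a ≠ a0 := (Finset.mem_erase.mp haS2).1
  have ha0S1 : a0 ∈ insert a0 B := Finset.mem_insert_self _ _
  have hr0lt : rk (insert a0 B) a0 < k := hS1 ▸ rk_lt_card ha0S1
  have hσx0 : σx ⟨0, hk⟩ = ⟨rk (insert a0 B) a0, hr0lt⟩ := Fin.ext hσx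
  have henum0 : enumC (insert a0 B) hS1 (σx ⟨0, hk⟩) = a0 := by
    rw [hσx0]; exact enumC_rk hS1 ha0S1
  have hx0 : (enumC (insert a0 B) hS1 ∘ σx) ⟨0, hk⟩ = a0 := henum0
  -- rewrite updates through the permutations
  have hupx : Function.update (enumC (insert a0 B) hS1 ∘ σx) ⟨0, hk⟩
      ((enumC (A.erase a0) hS2 ∘ σy) i)
      = (Function.update (enumC (insert a0 B) hS1) (σx ⟨0, hk⟩) a) ∘ σx := by
    rw [update_comp_perm]
    rfl
  have hupy : Function.update (enumC (A.erase a0) hS2 ∘ σy) i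
      ((enumC (insert a0 B) hS1 ∘ σx) ⟨0, hk⟩)
      = (Function.update (enumC (A.erase a0) hS2) (σy i) a0) ∘ σy := by
    rw [hx0, update_comp_perm]
  rw [hupx, hupy, halt _ σx, halt _ σy]
  by_cases haB : a ∈ B
  · -- the first update is not injective, and the matching p-factor vanishes
    have hzero : χ (Function.update (enumC (insert a0 B) hS1) (σx ⟨0, hk⟩) a) = 0 := by
      apply chi_zero_of_not_injective halt
      intro hinj
      have haS1 : a ∈ insert a0 B := Finset.mem_insert_of_mem haB
      have hralt : rk (insert a0 B) a < k := hS1 ▸ rk_lt_card haS1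
      have h1 : Function.update (enumC (insert a0 B) hS1) (σx ⟨0, hk⟩) a
          ⟨rk (insert a0 B) a, hralt⟩ = a := by
        rw [Function.update_of_ne, enumC_rk hS1 haS1]
        intro he
        have := congrArg (fun z : Fin k => (z : ℕ)) he
        simp only [hσx0] at this
        exact haa0 (rk_injOn haS1 ha0S1 this)
      have h2 : Function.update (enumC (insert a0 B) hS1) (σx ⟨0, hk⟩) a
          (σx ⟨0, hk⟩) = a := Function.update_self _ _ _
      have := hinj (h1.trans h2.symm)
      have := congrArg (fun z : Fin k => (z : ℕ)) this
      simp only [hσx0] at this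
      exact haa0 (rk_injOn haS1 ha0S1 this)
    have hins : insert a B = B := Finset.insert_eq_self.mpr haB
    have hpB : setMapOfChirotope χ (insert a B) = 0 := by
      rw [hins]; exact setMap_ne (by omega)
    rw [hzero, hpB]
    ring
  · -- main case
    have haS1 : a ∉ insert a0 B := by
      simp only [Finset.mem_insert]
      push_neg
      exact ⟨haa0, haB⟩
    have hTcard : (insert a B).card = k := by
      rw [Finset.card_insert_of_notMem haB]; omega
    have hT'card : (A.erase a).card = k := by
      rw [Finset.card_erase_of_mem haA, hA]; omega
    -- first REP
    have herase1 : (insert a0 B).erase (enumC (insert a0 B) hS1 (σx ⟨0, hk⟩)) = B := by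
      rw [henum0, Finset.erase_insert ha0B]
    have hrep1 := chi_update halt hS1 hTcard (σx ⟨0, hk⟩)
      (a := a) (by rw [herase1]; exact haB)
      (by rw [herase1])
    -- second REP
    have herase2 : a0 ∉ (A.erase a0).erase (enumC (A.erase a0) hS2 (σy i)) := by
      intro hmem
      exact (Finset.mem_erase.mp (Finset.mem_of_mem_erase hmem)).1 rfl
    have hrep2 := chi_update halt hS2 hT'card (σy i) (a := a0) herase2
      (by rw [← hadef]; exact erase_eq_insert_erase_erase ha0A haa0)
    rw [hrep1, hrep2]
    rw [← setMap_eq (χ := χ) hTcard, ← setMap_eq (χ := χ) hT'card]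
    -- now the sign bookkeeping
    have hrkT : rk (insert a B) a = rk B a := by
      rw [rk_insert haB a, if_neg (lt_irrefl a)]; omega
    have hrkA : rk A a = rk (A.erase a0) a + (if a0 < a then 1 else 0) := rk_erase ha0A a
    have hrkA0 : rk A a0 = rk (A.erase a) a0 + (if a < a0 then 1 else 0) := rk_erase haA a0
    have hsum : (if a0 < a then (1:ℕ) else 0) + (if a < a0 then 1 else 0) = 1 :=
      if_lt_sum (Ne.symm haa0)
    have hsd := rk_symmDiff A B a
    have hsyi : ((σy i : Fin k) : ℕ) = rk (A.erase a0) a := by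
      rw [hadef]; exact (rk_enumC _ hS2 (σy i)).symm
    have hpow : ((-1:ℤ)) ^ (((σx ⟨0, hk⟩ : Fin k) : ℕ) + rk (insert a B) a)
        * ((-1:ℤ)) ^ (((σy i : Fin k) : ℕ) + rk (A.erase a) a0)
        = ((-1:ℤ)) ^ (rk (insert a0 B) a0 + rk A a0)
          * ((-1:ℤ)) ^ (rk (symmDiff A B) a + 1) := by
      rw [← pow_add, ← pow_add]
      apply neg_one_pow_congr_mod
      rw [hσx]
      omega
    calc (Equiv.Perm.sign σx : ℤ) *
          ((-1:ℤ) ^ (((σx ⟨0, hk⟩ : Fin k) : ℕ) + rk (insert a B) a)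
            * setMapOfChirotope χ (insert a B))
        * ((Equiv.Perm.sign σy : ℤ) *
          ((-1:ℤ) ^ (((σy i : Fin k) : ℕ) + rk (A.erase a) a0)
            * setMapOfChirotope χ (A.erase a)))
        = (Equiv.Perm.sign σx : ℤ) * (Equiv.Perm.sign σy : ℤ)
          * ((-1:ℤ) ^ (((σx ⟨0, hk⟩ : Fin k) : ℕ) + rk (insert a B) a)
            * (-1:ℤ) ^ (((σy i : Fin k) : ℕ) + rk (A.erase a) a0))
          * (setMapOfChirotope χ (insert a B) * setMapOfChirotope χ (A.erase a)) := by
          ring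
      _ = (Equiv.Perm.sign σx : ℤ) * (Equiv.Perm.sign σy : ℤ)
          * ((-1:ℤ) ^ (rk (insert a0 B) a0 + rk A a0)
            * (-1:ℤ) ^ (rk (symmDiff A B) a + 1))
          * (setMapOfChirotope χ (insert a B) * setMapOfChirotope χ (A.erase a)) := by
          rw [hpow]
      _ = (Equiv.Perm.sign σx : ℤ) * (Equiv.Perm.sign σy : ℤ)
          * (-1:ℤ) ^ (rk (insert a0 B) a0 + rk A a0)
          * ((-1:ℤ) ^ (rk (symmDiff A B) a + 1)
            * setMapOfChirotope χ (A.erase a) * setMapOfChirotope χ (insert a B)) := by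
          ring

lemma neg_one_pow_one_or (m : ℕ) : ((-1:ℤ)) ^ m = 1 ∨ ((-1:ℤ)) ^ m = -1 := by
  rcases Nat.even_or_odd m with h | h
  · exact Or.inl h.neg_one_pow
  · exact Or.inr h.neg_one_pow

lemma neg_one_pow_add_eq_zero {e0 ec : ℕ} (h : (e0 + ec) % 2 = 1) :
    ((-1:ℤ)) ^ e0 + ((-1:ℤ)) ^ ec = 0 := by
  rcases Nat.even_or_odd e0 with h0 | h0
  · have hc : Odd ec := by rw [Nat.even_iff] at h0; rw [Nat.odd_iff]; omega
    rw [h0.neg_one_pow, hc.neg_one_pow]; ring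
  · have hc : Even ec := by rw [Nat.odd_iff] at h0; rw [Nat.even_iff]; omega
    rw [h0.neg_one_pow, hc.neg_one_pow]; ring

lemma rk_singleton_self (a : Fin n) : rk {a} a = 0 := by
  rw [rk, Finset.filter_singleton, if_neg (lt_irrefl a)]
  rfl

lemma sign_cases (σ : Equiv.Perm (Fin k)) :
    ((Equiv.Perm.sign σ : ℤˣ) : ℤ) = 1 ∨ ((Equiv.Perm.sign σ : ℤˣ) : ℤ) = -1 := by
  rcases Int.units_eq_one_or (Equiv.Perm.sign σ) with h | h <;> rw [h] <;> simp

lemma setMap_support {χ : (Fin k → Fin n) → ℤ} {S : Finset (Fin n)}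
    (h : setMapOfChirotope χ S ≠ 0) : S.card = k := by
  by_contra hc
  exact h (setMap_ne hc)

/-- Forward auxiliary lemma: assuming the chirotope axioms, every nonnegative
family of Δ-exchange terms vanishes (case `|A| = k+1`, `|B| = k-1`). -/
lemma aux_delta {χ : (Fin k → Fin n) → ℤ} (halt : Alt χ)
    (hGP : ∀ (hk : 0 < k) (x y : Fin k → Fin n),
      (∀ i : Fin k,
        0 ≤ χ (Function.update x ⟨0, hk⟩ (y i)) * χ (Function.update y i (x ⟨0, hk⟩))) →
      0 ≤ χ x * χ y)
    {A B : Finset (Fin n)} (hA : A.card = k + 1) (hB : B.card + 1 = k)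
    {w : ℤ} (hw : w = 1 ∨ w = -1)
    (H : ∀ a ∈ A, a ∉ B → 0 ≤ w * (-1 : ℤ) ^ (rk (symmDiff A B) a + 1)
      * setMapOfChirotope χ (A.erase a) * setMapOfChirotope χ (insert a B))
    {a0 : Fin n} (ha0A : a0 ∈ A) (ha0B : a0 ∉ B) :
    w * (-1 : ℤ) ^ (rk (symmDiff A B) a0 + 1)
      * setMapOfChirotope χ (A.erase a0) * setMapOfChirotope χ (insert a0 B) = 0 := by
  classical
  have hk : 0 < k := by omega
  have hS1 : (insert a0 B).card = k := by
    rw [Finset.card_insert_of_notMem ha0B]; omega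
  have hS2 : (A.erase a0).card = k := by
    rw [Finset.card_erase_of_mem ha0A, hA]; omega
  by_cases hk1 : k = 1
  · -- special pairing argument for rank 1
    have hBe : B = ∅ := Finset.card_eq_zero.mp (by omega)
    subst hBe
    have hD : symmDiff A (∅ : Finset (Fin n)) = A := by
      ext x; simp [Finset.mem_symmDiff]
    obtain ⟨c, hc⟩ := Finset.card_eq_one.mp (by rw [hS2, hk1] : (A.erase a0).card = 1)
    have hcA : c ∈ A := Finset.mem_of_mem_erase (hc ▸ Finset.mem_singleton_self c)
    have hca0 : c ≠ a0 := (Finset.mem_erase.mp (hc ▸ Finset.mem_singleton_self c)).1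
    have hAec : A.erase c = {a0} := by
      ext x
      simp only [Finset.mem_erase, Finset.mem_singleton]
      constructor
      · rintro ⟨hxc, hxA⟩
        by_contra hx0
        have : x ∈ A.erase a0 := Finset.mem_erase.mpr ⟨hx0, hxA⟩
        rw [hc, Finset.mem_singleton] at this
        exact hxc this
      · rintro rfl
        exact ⟨fun h => hca0 h.symm, ha0A⟩
    have hr1 : rk A a0 = rk (A.erase c) a0 + (if c < a0 then 1 else 0) := rk_erase hcA a0
    have hr2 : rk A c = rk (A.erase a0) c + (if a0 < c then 1 else 0) := rk_erase ha0A c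
    rw [hAec, rk_singleton_self] at hr1
    rw [hc, rk_singleton_self] at hr2
    have hsum := if_lt_sum hca0.symm (n := n) (a := a0) (b := c)
    have hκ0 := H a0 ha0A (Finset.notMem_empty a0)
    have hκc := H c hcA (Finset.notMem_empty c)
    have hzero : ((-1:ℤ)) ^ (rk (symmDiff A (∅ : Finset (Fin n))) a0 + 1)
        + ((-1:ℤ)) ^ (rk (symmDiff A (∅ : Finset (Fin n))) c + 1) = 0 := by
      apply neg_one_pow_add_eq_zero
      rw [hD]
      omega
    have hsum0 : w * (-1 : ℤ) ^ (rk (symmDiff A (∅ : Finset (Fin n))) a0 + 1)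
          * setMapOfChirotope χ (A.erase a0) * setMapOfChirotope χ (insert a0 ∅)
        + w * (-1 : ℤ) ^ (rk (symmDiff A (∅ : Finset (Fin n))) c + 1)
          * setMapOfChirotope χ (A.erase c) * setMapOfChirotope χ (insert c ∅) = 0 := by
      rw [hc, hAec]
      have hi0 : (insert a0 ∅ : Finset (Fin n)) = {a0} := rfl
      have hic : (insert c ∅ : Finset (Fin n)) = {c} := rfl
      rw [hi0, hic]
      calc w * (-1 : ℤ) ^ (rk (symmDiff A (∅ : Finset (Fin n))) a0 + 1)
            * setMapOfChirotope χ {c} * setMapOfChirotope χ {a0}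
          + w * (-1 : ℤ) ^ (rk (symmDiff A (∅ : Finset (Fin n))) c + 1)
            * setMapOfChirotope χ {a0} * setMapOfChirotope χ {c}
          = w * (((-1 : ℤ) ^ (rk (symmDiff A (∅ : Finset (Fin n))) a0 + 1)
              + (-1 : ℤ) ^ (rk (symmDiff A (∅ : Finset (Fin n))) c + 1))
            * (setMapOfChirotope χ {c} * setMapOfChirotope χ {a0})) := by ring
        _ = 0 := by rw [hzero]; ring
    linarith
  · -- general case via Grassmann–Plücker
    have hk2 : 1 < k := by omega
    have ha0S1 : a0 ∈ insert a0 B := Finset.mem_insert_self _ _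
    have hr0lt : rk (insert a0 B) a0 < k := hS1 ▸ rk_lt_card ha0S1
    set σx : Equiv.Perm (Fin k) := Equiv.swap ⟨0, hk⟩ ⟨rk (insert a0 B) a0, hr0lt⟩ with hσxdef
    have hσx : ((σx ⟨0, hk⟩ : Fin k) : ℕ) = rk (insert a0 B) a0 := by
      rw [hσxdef, Equiv.swap_apply_left]
    have hsx := sign_cases σx
    set ε : ℤ := w * (-1 : ℤ) ^ (rk (insert a0 B) a0 + rk A a0) with hεdef
    have hpow1 := neg_one_pow_one_or (rk (insert a0 B) a0 + rk A a0)
    have hε : ε = 1 ∨ ε = -1 := by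
      rcases hw with rfl | rfl <;> rcases hpow1 with h | h <;>
        rw [hεdef, h] <;> simp
    have hsε : (Equiv.Perm.sign σx : ℤ) * ε = 1 ∨ (Equiv.Perm.sign σx : ℤ) * ε = -1 := by
      rcases hsx with h1 | h1 <;> rcases hε with h2 | h2 <;> rw [h1, h2] <;> norm_num
    set σy : Equiv.Perm (Fin k) :=
      if (Equiv.Perm.sign σx : ℤ) * ε = 1 then Equiv.refl _
      else Equiv.swap ⟨0, hk⟩ ⟨1, hk2⟩ with hσydef
    have hsy : (Equiv.Perm.sign σy : ℤ) = (Equiv.Perm.sign σx : ℤ) * ε := by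
      rw [hσydef]
      split_ifs with h
    -- continued below
      · rw [h]; simp
      · have hne : (⟨0, hk⟩ : Fin k) ≠ ⟨1, hk2⟩ := by
          intro he; exact absurd (congrArg (fun z : Fin k => (z : ℕ)) he) (by simp)
        rw [Equiv.Perm.sign_swap hne]
        rcases hsε with h1 | h1
        · exact absurd h1 h
        · rw [h1]; simp
    have hsxsy : (Equiv.Perm.sign σx : ℤ) * (Equiv.Perm.sign σy : ℤ) = ε := by
      rw [hsy]
      rcases hsx with h | h <;> rw [h] <;> ring
    have hεF : ε * (-1 : ℤ) ^ (rk (insert a0 B) a0 + rk A a0) = w := by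
      rw [hεdef, mul_assoc, ← pow_add]
      have : ((-1:ℤ)) ^ ((rk (insert a0 B) a0 + rk A a0) + (rk (insert a0 B) a0 + rk A a0)) = 1 := by
        apply Even.neg_one_pow
        exact ⟨rk (insert a0 B) a0 + rk A a0, rfl⟩
      rw [this, mul_one]
    have hGPhyp : ∀ i : Fin k,
        0 ≤ χ (Function.update (enumC (insert a0 B) hS1 ∘ σx) ⟨0, hk⟩
            ((enumC (A.erase a0) hS2 ∘ σy) i))
          * χ (Function.update (enumC (A.erase a0) hS2 ∘ σy) i
            ((enumC (insert a0 B) hS1 ∘ σx) ⟨0, hk⟩)) := by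
      intro i
      rw [prod_formula halt hk hA hB ha0A ha0B hS1 hS2 σx σy hσx i, hsxsy]
      set a := enumC (A.erase a0) hS2 (σy i) with hadef
      have haS2 : a ∈ A.erase a0 := enumC_mem _ _ _
      have haA : a ∈ A := (Finset.mem_erase.mp haS2).2
      by_cases haB : a ∈ B
      · rw [Finset.insert_eq_self.mpr haB, setMap_ne (S := B) (by omega)]
        simp
      · have hHa := H a haA haB
        calc (0:ℤ) ≤ w * (-1 : ℤ) ^ (rk (symmDiff A B) a + 1)
              * setMapOfChirotope χ (A.erase a) * setMapOfChirotope χ (insert a B) := hHa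
          _ = ε * (-1 : ℤ) ^ (rk (insert a0 B) a0 + rk A a0)
              * ((-1 : ℤ) ^ (rk (symmDiff A B) a + 1)
                * setMapOfChirotope χ (A.erase a) * setMapOfChirotope χ (insert a B)) := by
              rw [hεF]; ring
    have hconc := hGP hk _ _ hGPhyp
    have hchixy : χ (enumC (insert a0 B) hS1 ∘ σx) * χ (enumC (A.erase a0) hS2 ∘ σy)
        = ε * setMapOfChirotope χ (insert a0 B) * setMapOfChirotope χ (A.erase a0) := by
      rw [halt _ σx, halt _ σy, ← setMap_eq (χ := χ) hS1, ← setMap_eq (χ := χ) hS2]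
      calc (Equiv.Perm.sign σx : ℤ) * setMapOfChirotope χ (insert a0 B)
            * ((Equiv.Perm.sign σy : ℤ) * setMapOfChirotope χ (A.erase a0))
          = ((Equiv.Perm.sign σx : ℤ) * (Equiv.Perm.sign σy : ℤ))
            * setMapOfChirotope χ (insert a0 B) * setMapOfChirotope χ (A.erase a0) := by ring
        _ = ε * setMapOfChirotope χ (insert a0 B) * setMapOfChirotope χ (A.erase a0) := by
            rw [hsxsy]
    rw [hchixy] at hconc
    -- κ0 = -(ε * p S1 * p S2)
    have hrkB0 : rk (insert a0 B) a0 = rk B a0 := by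
      rw [rk_insert ha0B a0, if_neg (lt_irrefl a0)]; omega
    have hsd0 := rk_symmDiff A B a0
    have hpar : ((-1:ℤ)) ^ (rk (symmDiff A B) a0 + 1)
        = ((-1:ℤ)) ^ ((rk (insert a0 B) a0 + rk A a0) + 1) :=
      neg_one_pow_congr_mod (by omega)
    have hκeq : w * (-1 : ℤ) ^ (rk (symmDiff A B) a0 + 1)
          * setMapOfChirotope χ (A.erase a0) * setMapOfChirotope χ (insert a0 B)
        = -(ε * setMapOfChirotope χ (insert a0 B) * setMapOfChirotope χ (A.erase a0)) := by
      rw [hpar, pow_succ, hεdef]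
      ring
    have hκ0 := H a0 ha0A ha0B
    linarith

lemma forward_direction {χ : (Fin k → Fin n) → ℤ} (hχ : IsChirotope χ) :
    IsOrientedEvenDeltaMatroid (setMapOfChirotope χ) := by
  classical
  obtain ⟨hval, ⟨v0, hv0⟩, halt, hGP⟩ := hχ
  have halt' : Alt χ := halt
  refine ⟨?_, ?_, ?_, ?_⟩
  · intro S
    by_cases h : S.card = k
    · rw [setMap_eq h]; exact hval _
    · rw [setMap_ne h]; exact Or.inr (Or.inl rfl)
  · have hv0inj : Function.Injective v0 := by
      by_contra h
      exact hv0 (chi_zero_of_not_injective halt' h)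
    refine ⟨imv v0, ?_⟩
    rw [setMap_eq (card_imv hv0inj)]
    intro h0
    rw [chi_of_injective halt' hv0inj, h0, mul_zero] at hv0
    exact hv0 rfl
  · intro A B hpA hpB
    rw [setMap_support hpA, setMap_support hpB]
  · intro A B w hw Hthm
    have HH : ∀ a ∈ symmDiff A B,
        0 ≤ w * (-1 : ℤ) ^ (rk (symmDiff A B) a + 1)
          * setMapOfChirotope χ (symmDiff A {a}) * setMapOfChirotope χ (symmDiff B {a}) := by
      intro a ha
      have hlt : rk (symmDiff A B) a < (symmDiff A B).card := rk_lt_card ha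
      have := Hthm ⟨rk (symmDiff A B) a, hlt⟩
      have henum : ((symmDiff A B).orderIsoOfFin rfl ⟨rk (symmDiff A B) a, hlt⟩ : Fin n) = a :=
        enumC_rk rfl ha
      rw [henum] at this
      exact this
    intro j
    have henumj : ((symmDiff A B).orderIsoOfFin rfl j : Fin n) = enumC (symmDiff A B) rfl j :=
      rfl
    set a := enumC (symmDiff A B) rfl j with hadef
    have haD : a ∈ symmDiff A B := enumC_mem _ _ _
    have hjrk : ((j : Fin (symmDiff A B).card) : ℕ) = rk (symmDiff A B) a :=
      (rk_enumC _ rfl j).symm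
    rw [henumj, hjrk]
    rcases Finset.mem_symmDiff.mp haD with ⟨haA, haB⟩ | ⟨haB, haA⟩
    · rw [symmDiff_singleton_of_mem haA, symmDiff_singleton_of_not_mem haB]
      by_cases hcards : A.card = k + 1 ∧ B.card + 1 = k
      · refine aux_delta halt' hGP hcards.1 hcards.2 hw ?_ haA haB
        intro a' ha'A ha'B
        have := HH a' (Finset.mem_symmDiff.mpr (Or.inl ⟨ha'A, ha'B⟩))
        rw [symmDiff_singleton_of_mem ha'A, symmDiff_singleton_of_not_mem ha'B] at this
        exact this
      · by_cases h1 : setMapOfChirotope χ (A.erase a) = 0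
        · rw [h1]; ring
        by_cases h2 : setMapOfChirotope χ (insert a B) = 0
        · rw [h2]; ring
        exfalso
        have c1 : (A.erase a).card = k := setMap_support h1
        have c2 : (insert a B).card = k := setMap_support h2
        rw [Finset.card_erase_of_mem haA] at c1
        rw [Finset.card_insert_of_notMem haB] at c2
        have hApos : 0 < A.card := Finset.card_pos.mpr ⟨a, haA⟩
        exact hcards ⟨by omega, c2⟩
    · rw [symmDiff_singleton_of_not_mem haA, symmDiff_singleton_of_mem haB]
      by_cases hcards : B.card = k + 1 ∧ A.card + 1 = k
      · have haux := aux_delta halt' hGP (A := B) (B := A) hcards.1 hcards.2 hw ?_ haB haA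
        · rw [symmDiff_comm B A] at haux
          linear_combination haux
        · intro a' ha'B ha'A
          have := HH a' (Finset.mem_symmDiff.mpr (Or.inr ⟨ha'B, ha'A⟩))
          rw [symmDiff_singleton_of_not_mem ha'A, symmDiff_singleton_of_mem ha'B] at this
          rw [symmDiff_comm B A]
          exact le_of_le_of_eq this (by ring)
      · by_cases h1 : setMapOfChirotope χ (insert a A) = 0
        · rw [h1]; ring
        by_cases h2 : setMapOfChirotope χ (B.erase a) = 0
        · rw [h2]; ring
        exfalso
        have c1 : (insert a A).card = k := setMap_support h1
        have c2 : (B.erase a).card = k := setMap_support h2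
        rw [Finset.card_insert_of_notMem haA] at c1
        rw [Finset.card_erase_of_mem haB] at c2
        have hBpos : 0 < B.card := Finset.card_pos.mpr ⟨a, haB⟩
        exact hcards ⟨by omega, c1⟩

/-- The chirotope associated to a map on finsets. -/
noncomputable def chiOf (p : Finset (Fin n) → ℤ) : (Fin k → Fin n) → ℤ :=
  fun v => if hv : Function.Injective v
    then (Equiv.Perm.sign (permOf v hv) : ℤ) * p (imv v) else 0

lemma chiOf_inj_eq (p : Finset (Fin n) → ℤ) {v : Fin k → Fin n}
    (hv : Function.Injective v) :
    chiOf p v = (Equiv.Perm.sign (permOf v hv) : ℤ) * p (imv v) := dif_pos hv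

lemma chiOf_not_inj (p : Finset (Fin n) → ℤ) {v : Fin k → Fin n}
    (hv : ¬ Function.Injective v) : chiOf p v = 0 := dif_neg hv

lemma imv_comp (v : Fin k → Fin n) (σ : Equiv.Perm (Fin k)) :
    imv (v ∘ σ) = imv v := by
  ext x
  simp only [imv, Finset.mem_image, Finset.mem_univ, true_and, Function.comp_apply]
  constructor
  · rintro ⟨i, rfl⟩; exact ⟨σ i, rfl⟩
  · rintro ⟨i, rfl⟩; exact ⟨σ.symm i, by rw [Equiv.apply_symm_apply]⟩

lemma imv_enumC {S : Finset (Fin n)} (hS : S.card = k) : imv (enumC S hS) = S := by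
  ext x
  simp only [imv, Finset.mem_image, Finset.mem_univ, true_and]
  constructor
  · rintro ⟨i, rfl⟩; exact enumC_mem S hS i
  · intro hx; exact enumC_surj S hS hx

lemma chiOf_alt (p : Finset (Fin n) → ℤ) : Alt (chiOf (k := k) p) := by
  intro v σ
  by_cases hv : Function.Injective v
  · have hvσ : Function.Injective (v ∘ σ) := hv.comp σ.injective
    rw [chiOf_inj_eq p hv, chiOf_inj_eq p hvσ]
    have himv := imv_comp v σ
    have hperm : (permOf v hv) * σ = permOf (v ∘ σ) hvσ := by
      apply permOf_eq
      intro i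
      have h1 : enumC (imv (v ∘ σ)) (card_imv hvσ) (((permOf v hv) * σ) i)
          = enumC (imv v) (card_imv hv) ((permOf v hv) (σ i)) := by
        rw [enumC_congr himv (card_imv hvσ)]
        rfl
      rw [h1, enumC_permOf hv (σ i)]
      rfl
    rw [← hperm, map_mul, himv]
    push_cast
    ring
  · have hvσ : ¬ Function.Injective (v ∘ σ) := by
      intro hc
      have : Function.Injective ((v ∘ σ) ∘ σ.symm) := hc.comp σ.symm.injective
      have he : (v ∘ σ) ∘ ⇑σ.symm = v := by
        funext i; simp
      rw [he] at this
      exact hv this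
    rw [chiOf_not_inj p hv, chiOf_not_inj p hvσ, mul_zero]

lemma chiOf_enumC (p : Finset (Fin n) → ℤ) {S : Finset (Fin n)} (hS : S.card = k) :
    chiOf p (enumC S hS) = p S := by
  have hinj := enumC_injective S hS
  rw [chiOf_inj_eq p hinj]
  have hid : Equiv.refl (Fin k) = permOf (enumC S hS) hinj := by
    apply permOf_eq
    intro i
    rw [enumC_congr (imv_enumC hS) (card_imv hinj)]
    rfl
  rw [← hid, imv_enumC hS]
  simp

lemma setMap_chiOf {p : Finset (Fin n) → ℤ} (hsupp : ∀ S, p S ≠ 0 → S.card = k) :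
    p = setMapOfChirotope (chiOf (k := k) p) := by
  funext S
  by_cases h : S.card = k
  · rw [setMap_eq h, chiOf_enumC p h]
  · by_cases hp : p S = 0
    · rw [hp, setMap_ne h]
    · exact absurd (hsupp S hp) h

lemma converse_direction {p : Finset (Fin n) → ℤ} (hM : IsOrientedEvenDeltaMatroid p)
    (hsupp : ∀ S, p S ≠ 0 → S.card = k) : IsChirotope (chiOf (k := k) p) := by
  classical
  obtain ⟨pval, ⟨S0, hS0⟩, hpar, hΔ⟩ := hM
  have halt : Alt (chiOf (k := k) p) := chiOf_alt p
  have hpfun : ∀ S, setMapOfChirotope (chiOf (k := k) p) S = p S :=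
    fun S => (congrFun (setMap_chiOf hsupp) S).symm
  refine ⟨?_, ?_, halt, ?_⟩
  · intro v
    by_cases hv : Function.Injective v
    · rw [chiOf_inj_eq p hv]
      rcases sign_cases (permOf v hv) with hs | hs <;>
        rcases pval (imv v) with hp | hp | hp <;> rw [hs, hp] <;> norm_num
    · rw [chiOf_not_inj p hv]
      exact Or.inr (Or.inl rfl)
  · refine ⟨enumC S0 (hsupp S0 hS0), ?_⟩
    rw [chiOf_enumC p (hsupp S0 hS0)]
    exact hS0
  · intro hk x y H
    by_cases hxinj : Function.Injective x
    swap
    · rw [chiOf_not_inj p hxinj, zero_mul]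
    by_cases hyinj : Function.Injective y
    swap
    · rw [chiOf_not_inj p hyinj, mul_zero]
    set a0 := x ⟨0, hk⟩ with ha0def
    by_cases ha0y : ∃ i, y i = a0
    · obtain ⟨i, hyi⟩ := ha0y
      have h1 : Function.update x ⟨0, hk⟩ (y i) = x := by
        rw [hyi, ha0def]; exact Function.update_eq_self _ _
      have h2 : Function.update y i (x ⟨0, hk⟩) = y := by
        rw [← ha0def, ← hyi]; exact Function.update_eq_self _ _
      have := H i
      rw [h1, h2] at this
      exact this
    · push_neg at ha0y
      by_contra hneg
      push_neg at hneg
      have hxy_neg : chiOf p x * chiOf p y < 0 := hneg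
      have ha0X : a0 ∈ imv x := mem_imv x ⟨0, hk⟩
      have ha0Y : a0 ∉ imv y := by
        intro hmem
        obtain ⟨i, _, hyi⟩ := Finset.mem_image.mp hmem
        exact ha0y i hyi
      set A : Finset (Fin n) := insert a0 (imv y) with hAdef
      set B : Finset (Fin n) := (imv x).erase a0 with hBdef
      have hX : (imv x).card = k := card_imv hxinj
      have hY : (imv y).card = k := card_imv hyinj
      have hA : A.card = k + 1 := by
        rw [hAdef, Finset.card_insert_of_notMem ha0Y, hY]
      have hB : B.card + 1 = k := by
        rw [hBdef, Finset.card_erase_of_mem ha0X, hX]; omega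
      have ha0A : a0 ∈ A := Finset.mem_insert_self _ _
      have ha0B : a0 ∉ B := Finset.notMem_erase _ _
      have hXeq : insert a0 B = imv x := by
        rw [hBdef]; exact Finset.insert_erase ha0X
      have hYeq : A.erase a0 = imv y := by
        rw [hAdef]; exact Finset.erase_insert ha0Y
      have hS1 : (insert a0 B).card = k := by rw [hXeq, hX]
      have hS2 : (A.erase a0).card = k := by rw [hYeq, hY]
      set σx := permOf x hxinj with hσxdef
      set σy := permOf y hyinj with hσydef
      have hxrw : x = enumC (insert a0 B) hS1 ∘ σx := by
        funext i
        rw [Function.comp_apply, enumC_congr hXeq hS1, hσxdef]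
        exact (enumC_permOf hxinj i).symm
      have hyrw : y = enumC (A.erase a0) hS2 ∘ σy := by
        funext i
        rw [Function.comp_apply, enumC_congr hYeq hS2, hσydef]
        exact (enumC_permOf hyinj i).symm
      have hσx : ((σx ⟨0, hk⟩ : Fin k) : ℕ) = rk (insert a0 B) a0 := by
        rw [hXeq, hσxdef, permOf_val hxinj, ← ha0def]
      set w : ℤ := (Equiv.Perm.sign σx : ℤ) * (Equiv.Perm.sign σy : ℤ)
        * (-1 : ℤ) ^ (rk (insert a0 B) a0 + rk A a0) with hwdef
      have hww : w = 1 ∨ w = -1 := by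
        rcases sign_cases σx with h1 | h1 <;> rcases sign_cases σy with h2 | h2 <;>
          rcases neg_one_pow_one_or (rk (insert a0 B) a0 + rk A a0) with h3 | h3 <;>
          rw [hwdef, h1, h2, h3] <;> norm_num
      have H2 : ∀ i : Fin k,
          0 ≤ w * ((-1 : ℤ) ^ (rk (symmDiff A B) (enumC (A.erase a0) hS2 (σy i)) + 1)
            * p (A.erase (enumC (A.erase a0) hS2 (σy i)))
            * p (insert (enumC (A.erase a0) hS2 (σy i)) B)) := by
        intro i
        have hpf := prod_formula halt hk hA hB ha0A ha0B hS1 hS2 σx σy hσx i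
        simp only [hpfun] at hpf
        have hcomp0 : (enumC (insert a0 B) hS1 ∘ ⇑σx) ⟨0, hk⟩ = a0 := by
          rw [← hxrw]
        rw [hcomp0] at hpf
        have := H i
        rw [hxrw, hyrw] at this
        rw [hpf] at this
        exact le_of_le_of_eq this (by rw [hwdef])
      have hrkB0 : rk (insert a0 B) a0 = rk B a0 := by
        rw [rk_insert ha0B a0, if_neg (lt_irrefl a0)]; omega
      have hsd0 := rk_symmDiff A B a0
      have hpar2 : ((-1:ℤ)) ^ (rk (symmDiff A B) a0 + 1)
          = ((-1:ℤ)) ^ ((rk (insert a0 B) a0 + rk A a0) + 1) :=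
        neg_one_pow_congr_mod (by omega)
      have hchix : chiOf p x = (Equiv.Perm.sign σx : ℤ) * p (insert a0 B) := by
        rw [chiOf_inj_eq p hxinj, ← hσxdef, hXeq]
      have hchiy : chiOf p y = (Equiv.Perm.sign σy : ℤ) * p (A.erase a0) := by
        rw [chiOf_inj_eq p hyinj, ← hσydef, hYeq]
      have hκ : w * (-1 : ℤ) ^ (rk (symmDiff A B) a0 + 1) * p (A.erase a0)
          * p (insert a0 B) = -(chiOf p x * chiOf p y) := by
        rw [hpar2, pow_succ, hwdef, hchix, hchiy]
        have hsq1 : ((-1:ℤ)) ^ (rk (insert a0 B) a0 + rk A a0)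
            * ((-1:ℤ)) ^ (rk (insert a0 B) a0 + rk A a0) = 1 := by
          rw [← pow_add]
          exact Even.neg_one_pow ⟨rk (insert a0 B) a0 + rk A a0, rfl⟩
        calc (Equiv.Perm.sign σx : ℤ) * (Equiv.Perm.sign σy : ℤ)
              * (-1 : ℤ) ^ (rk (insert a0 B) a0 + rk A a0)
              * ((-1 : ℤ) ^ (rk (insert a0 B) a0 + rk A a0) * -1)
              * p (A.erase a0) * p (insert a0 B)
            = -((Equiv.Perm.sign σx : ℤ) * (Equiv.Perm.sign σy : ℤ)
                * ((-1 : ℤ) ^ (rk (insert a0 B) a0 + rk A a0)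
                  * (-1 : ℤ) ^ (rk (insert a0 B) a0 + rk A a0))
                * p (A.erase a0) * p (insert a0 B)) := by ring
          _ = -((Equiv.Perm.sign σx : ℤ) * p (insert a0 B)
                * ((Equiv.Perm.sign σy : ℤ) * p (A.erase a0))) := by
              rw [hsq1]; ring
      -- the Δ-matroid hypothesis
      have ha0D : a0 ∈ symmDiff A B := Finset.mem_symmDiff.mpr (Or.inl ⟨ha0A, ha0B⟩)
      have hΔhyp : ∀ j : Fin (symmDiff A B).card,
          0 ≤ w * (-1 : ℤ) ^ ((j : ℕ) + 1) *
            p (symmDiff A {((symmDiff A B).orderIsoOfFin rfl j : Fin n)}) *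
            p (symmDiff B {((symmDiff A B).orderIsoOfFin rfl j : Fin n)}) := by
        intro j
        have henumj : ((symmDiff A B).orderIsoOfFin rfl j : Fin n)
            = enumC (symmDiff A B) rfl j := rfl
        set a := enumC (symmDiff A B) rfl j with hadef2
        have haD : a ∈ symmDiff A B := enumC_mem _ _ _
        have hjrk : ((j : Fin (symmDiff A B).card) : ℕ) = rk (symmDiff A B) a :=
          (rk_enumC _ rfl j).symm
        rw [henumj, hjrk]
        rcases Finset.mem_symmDiff.mp haD with ⟨haA, haB⟩ | ⟨haB, haA⟩
        · rw [symmDiff_singleton_of_mem haA, symmDiff_singleton_of_not_mem haB]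
          by_cases haa0 : a = a0
          · -- the pivot term equals minus the GP conclusion
            rw [haa0, hκ]
            linarith
          · -- a ∈ Y \ B : one of the GP hypothesis terms
            have haY : a ∈ imv y := by
              rw [← hYeq]
              exact Finset.mem_erase.mpr ⟨haa0, haA⟩
            obtain ⟨i, _, hyi⟩ := Finset.mem_image.mp haY
            have hai : enumC (A.erase a0) hS2 (σy i) = a := by
              have := congrFun hyrw i
              rw [Function.comp_apply] at this
              rw [← this, hyi]
            have h2i := H2 i
            rw [hai] at h2i
            exact le_of_le_of_eq h2i (by ring)
        · -- a ∈ B \ A : the term vanishes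
          rw [symmDiff_singleton_of_not_mem haA, symmDiff_singleton_of_mem haB]
          have hz : p (insert a A) = 0 := by
            by_contra hc
            have := hsupp _ hc
            rw [Finset.card_insert_of_notMem haA, hA] at this
            omega
          rw [hz]
          simp
      have hΔconc := hΔ A B w hww hΔhyp ⟨rk (symmDiff A B) a0, rk_lt_card ha0D⟩
      have henumj0 : ((symmDiff A B).orderIsoOfFin rfl
          ⟨rk (symmDiff A B) a0, rk_lt_card ha0D⟩ : Fin n) = a0 :=
        enumC_rk rfl ha0D
      rw [henumj0] at hΔconc
      rw [symmDiff_singleton_of_mem ha0A, symmDiff_singleton_of_not_mem ha0B] at hΔconc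
      -- again the pivot identity
      -- hΔconc : w * (-1)^(rk D a0 + 1) * p (A.erase a0) * p (insert a0 B)?? check order
      have hfinal : chiOf p x * chiOf p y = 0 := by
        have := hΔconc
        -- this : w * (-1)^(↑j+1) * p (A.erase a0) * p (insert a0 B) = 0 with ↑j = rk
        have hjv : ((⟨rk (symmDiff A B) a0, rk_lt_card ha0D⟩ :
            Fin (symmDiff A B).card) : ℕ) = rk (symmDiff A B) a0 := rfl
        rw [hjv] at this
        rw [hκ] at this
        linarith
      linarith

/-- Every chirotope of rank `k` on `I` yields an oriented even Δ-matroid supported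
on `k`-sets; conversely, every oriented even Δ-matroid whose support consists only
of `k`-sets arises in this way from a chirotope. -/
theorem chirotope_iff_orientedEvenDeltaMatroid {n k : ℕ} :
    (∀ χ : (Fin k → Fin n) → ℤ, IsChirotope χ →
      IsOrientedEvenDeltaMatroid (setMapOfChirotope χ)) ∧
    (∀ p : Finset (Fin n) → ℤ, IsOrientedEvenDeltaMatroid p →
      (∀ S, p S ≠ 0 → S.card = k) →
      ∃ χ : (Fin k → Fin n) → ℤ, IsChirotope χ ∧ p = setMapOfChirotope χ) := by
  constructor
  · intro χ hχ
    exact forward_direction hχ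
  · intro p hM hsupp
    exact ⟨chiOf p, converse_direction hM hsupp, setMap_chiOf hsupp⟩
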